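/- Let G_β = ⟨x, a, b, c⟩ be a group generated by involutions x, a, b, c such that a, b, c pairwise commute and ⟨u, v^g⟩ is nilpotent of class at most 2 for all u, v ∈ {x, a, b, c} and all g ∈ G_β. Then: (1) [x, x^{ab}] = [x^a, x^b] and this element commutes with x, a and b; (2) [x, x^{bc}] = [x^b, x^c] and this element commutes with x, b and c; (3) [x, x^{ca}] = [x^c, x^a] and this element commutes with x, c and a. -/

import Mathlib

/-- The paper's commutator `[g,h] = g⁻¹h⁻¹gh`. -/
def paperComm {G : Type*} [Group G] (g h : G) : G := g⁻¹ * h⁻¹ * g * h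

section Helpers

open scoped commutatorElement

variable {G : Type*} [Group G]

private theorem sw {A B : G} (h : Commute A B) (C : G) : A * (B * C) = B * (A * C) := by
  rw [← mul_assoc, h.eq, mul_assoc]

private theorem can {A : G} (h : A * A = 1) (C : G) : A * (A * C) = C := by
  rw [← mul_assoc, h, one_mul]

private theorem sand_pair (u w : G)
    (h : (⊤ : Subgroup ↥(Subgroup.closure ({u, w} : Set G))).lowerCentralSeries 2 = ⊥) :
    Commute ⁅u, w⁆ u ∧ Commute ⁅u, w⁆ w := by
  have hu : u ∈ Subgroup.closure ({u, w} : Set G) :=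
    Subgroup.subset_closure (Set.mem_insert _ _)
  have hw : w ∈ Subgroup.closure ({u, w} : Set G) :=
    Subgroup.subset_closure (Set.mem_insert_of_mem _ rfl)
  set K := Subgroup.closure ({u, w} : Set G) with hK
  have main : ∀ V : K, ⁅⁅(⟨u, hu⟩ : K), (⟨w, hw⟩ : K)⁆, V⁆ = 1 := by
    intro V
    have h1 : ⁅(⟨u, hu⟩ : K), (⟨w, hw⟩ : K)⁆ ∈ (⊤ : Subgroup K).lowerCentralSeries 1 := by
      rw [Subgroup.top_lowerCentralSeries_one, commutator_def]
      exact Subgroup.commutator_mem_commutator (Subgroup.mem_top _) (Subgroup.mem_top _)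
    have h2 : ⁅⁅(⟨u, hu⟩ : K), (⟨w, hw⟩ : K)⁆, V⁆ ∈ (⊤ : Subgroup K).lowerCentralSeries 2 := by
      have e : (⊤ : Subgroup K).lowerCentralSeries 2 = ⁅(⊤ : Subgroup K).lowerCentralSeries 1, ⊤⁆ := rfl
      rw [e]
      exact Subgroup.commutator_mem_commutator h1 (Subgroup.mem_top _)
    rw [h] at h2
    exact Subgroup.mem_bot.mp h2
  constructor
  · have h4 := main ⟨u, hu⟩
    have h5 : K.subtype ⁅⁅(⟨u, hu⟩ : K), (⟨w, hw⟩ : K)⁆, (⟨u, hu⟩ : K)⁆ = 1 := by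
      rw [h4, map_one]
    rw [map_commutatorElement, map_commutatorElement] at h5
    exact commutatorElement_eq_one_iff_commute.mp h5
  · have h4 := main ⟨w, hw⟩
    have h5 : K.subtype ⁅⁅(⟨u, hu⟩ : K), (⟨w, hw⟩ : K)⁆, (⟨w, hw⟩ : K)⁆ = 1 := by
      rw [h4, map_one]
    rw [map_commutatorElement, map_commutatorElement] at h5
    exact commutatorElement_eq_one_iff_commute.mp h5

private theorem pair_content {u v : G} (hu : u * u = 1) (hv : v * v = 1)
    (h : Commute ⁅u, v⁆ u) : Commute (u * (v * u)) v := by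
  have iu : u⁻¹ = u := inv_eq_of_mul_eq_one_right hu
  have iv : v⁻¹ = v := inv_eq_of_mul_eq_one_right hv
  have e : ⁅u, v⁆ = u * (v * (u * v)) := by
    rw [commutatorElement_def, iu, iv, mul_assoc, mul_assoc]
  rw [e] at h
  have h2 : u * (v * (u * v)) * u = u * (u * (v * (u * v))) := h.eq
  have h3 : u * (v * (u * v)) * u = v * (u * v) := by rw [h2, can hu]
  have h4 : u * (v * (u * v)) * u * u = v * (u * v) * u := by rw [h3]
  show u * (v * u) * v = v * (u * (v * u))
  simp only [mul_assoc] at h4 ⊢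
  rw [hu, mul_one] at h4
  exact h4

private theorem Mlemma (x z q qz : G) (cxz : Commute x z) (cxq : Commute x q)
    (czqz : Commute z qz) (cqqz : Commute q qz) :
    (x * q) * ((z * qz) * ((x * q) * (z * qz))) =
      (q * (z * (q * z))) * (x * (qz * (x * qz))) := by
  simp only [mul_assoc]
  rw [sw cxq, sw cxz, sw cxq, sw cqqz.symm, sw cxq, sw cxz, sw czqz.symm, sw cxz]

private theorem Slemma (x y z : G) (hx : x * x = 1) (cxy : Commute x y)
    (cxz : Commute x z) :
    (x * y) * (z * ((x * y) * z)) = y * (z * (y * z)) := by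
  simp only [mul_assoc]
  rw [sw cxy, sw cxz, can hx]

private theorem Tlemma (x z qz : G) (hz : z * z = 1) (cxz : Commute x z)
    (czqz : Commute z qz) :
    x * ((z * qz) * (x * (z * qz))) = x * (qz * (x * qz)) := by
  simp only [mul_assoc]
  rw [sw cxz, sw cxz, sw czqz.symm, sw cxz, can hz]

set_option maxHeartbeats 2000000 in
private theorem key (x a b : G)
    (hx : x * x = 1) (ha : a * a = 1) (hb : b * b = 1) (hab : a * b = b * a)
    (S1 : (⊤ : Subgroup ↥(Subgroup.closure ({x, (a * b)⁻¹ * x * (a * b)} : Set G))).lowerCentralSeries 2 = ⊥)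
    (S2 : (⊤ : Subgroup ↥(Subgroup.closure ({b, a⁻¹ * x * a} : Set G))).lowerCentralSeries 2 = ⊥)
    (S3 : (⊤ : Subgroup ↥(Subgroup.closure ({a, a⁻¹ * x * a} : Set G))).lowerCentralSeries 2 = ⊥)
    (S4 : (⊤ : Subgroup ↥(Subgroup.closure ({a, b⁻¹ * x * b} : Set G))).lowerCentralSeries 2 = ⊥)
    (S5 : (⊤ : Subgroup ↥(Subgroup.closure ({b, b⁻¹ * x * b} : Set G))).lowerCentralSeries 2 = ⊥)
    (S6 : (⊤ : Subgroup ↥(Subgroup.closure ({b, x⁻¹ * a * x} : Set G))).lowerCentralSeries 2 = ⊥) :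
    paperComm x ((a * b)⁻¹ * x * (a * b)) = paperComm (a⁻¹ * x * a) (b⁻¹ * x * b) ∧
    Commute (paperComm x ((a * b)⁻¹ * x * (a * b))) x ∧
    Commute (paperComm x ((a * b)⁻¹ * x * (a * b))) a ∧
    Commute (paperComm x ((a * b)⁻¹ * x * (a * b))) b := by
  have ix : x⁻¹ = x := inv_eq_of_mul_eq_one_right hx
  have ia : a⁻¹ = a := inv_eq_of_mul_eq_one_right ha
  have ib : b⁻¹ = b := inv_eq_of_mul_eq_one_right hb
  have cab : Commute a b := hab
  -- rewrite conjugates into bracket-free form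
  have ey : a⁻¹ * x * a = (a * (x * a)) := by rw [ia, mul_assoc]
  have ez : b⁻¹ * x * b = (b * (x * b)) := by rw [ib, mul_assoc]
  obtain ⟨c1a, -⟩ := sand_pair x ((a * b)⁻¹ * x * (a * b)) S1
  obtain ⟨c2a, -⟩ := sand_pair b (a⁻¹ * x * a) S2
  obtain ⟨c3a, -⟩ := sand_pair a (a⁻¹ * x * a) S3
  obtain ⟨c4a, -⟩ := sand_pair a (b⁻¹ * x * b) S4
  obtain ⟨c5a, -⟩ := sand_pair b (b⁻¹ * x * b) S5
  obtain ⟨c6a, -⟩ := sand_pair b (x⁻¹ * a * x) S6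
  rw [ey] at c2a c3a
  rw [ez] at c4a c5a
  -- involutivity of the basic words
  have hyy : (a * (x * a)) * (a * (x * a)) = 1 := by simp only [mul_assoc, can hx, can ha, can hb, sw cab, hx, ha, hb, hab, mul_one, one_mul]
  have hzz : (b * (x * b)) * (b * (x * b)) = 1 := by simp only [mul_assoc, can hx, can ha, can hb, sw cab, hx, ha, hb, hab, mul_one, one_mul]
  have hpp : (x⁻¹ * a * x) * (x⁻¹ * a * x) = 1 := by
    simp only [ix, mul_assoc, can hx, can ha, can hb, sw cab, hx, ha, hb, hab, mul_one, one_mul]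
  -- basic commuting facts
  have cxy : Commute x (a * (x * a)) := by
    have h := pair_content ha hyy c3a
    have e : a * ((a * (x * a)) * a) = x := by simp only [mul_assoc, can hx, can ha, can hb, sw cab, hx, ha, hb, hab, mul_one, one_mul]
    rw [e] at h; exact h
  have cxz : Commute x (b * (x * b)) := by
    have h := pair_content hb hzz c5a
    have e : b * ((b * (x * b)) * b) = x := by simp only [mul_assoc, can hx, can ha, can hb, sw cab, hx, ha, hb, hab, mul_one, one_mul]
    rw [e] at h; exact h
  have cwy : Commute (a * ((b * (x * b)) * a)) (a * (x * a)) := by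
    have h := pair_content hb hyy c2a
    have e : b * ((a * (x * a)) * b) = (a * ((b * (x * b)) * a)) := by simp only [mul_assoc, can hx, can ha, can hb, sw cab, hx, ha, hb, hab, mul_one, one_mul]
    rw [e] at h; exact h
  have czw : Commute (a * ((b * (x * b)) * a)) (b * (x * b)) := pair_content ha hzz c4a
  have cqa : Commute (x * (a * (x * a))) a := by
    have e : ⁅a, (a * (x * a))⁆ = (x * (a * (x * a))) := by
      simp only [commutatorElement_def, mul_inv_rev, inv_inv, ix, ia, ib, mul_assoc,
        can hx, can ha, can hb, sw cab, hx, ha, hb, hab, mul_one, one_mul]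
    rw [e] at c3a; exact c3a
  have cqza : Commute ((b * (x * b)) * (a * ((b * (x * b)) * a))) a := by
    have h := c4a.inv_left
    have e : ⁅a, (b * (x * b))⁆⁻¹ = ((b * (x * b)) * (a * ((b * (x * b)) * a))) := by
      simp only [commutatorElement_def, mul_inv_rev, inv_inv, ix, ia, ib, mul_assoc,
        can hx, can ha, can hb, sw cab, hx, ha, hb, hab, mul_one, one_mul]
    rw [e] at h; exact h
  have cpa : Commute ((x * (a * (x * a))) * a) a := Commute.mul_left cqa (Commute.refl a)
  have cPa : Commute (((b * (x * b)) * (a * ((b * (x * b)) * a))) * a) a := Commute.mul_left cqza (Commute.refl a)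
  have cPp : Commute (((b * (x * b)) * (a * ((b * (x * b)) * a))) * a) ((x * (a * (x * a))) * a) := by
    have h := pair_content hb hpp c6a
    have e1 : b * ((x⁻¹ * a * x) * b) = (((b * (x * b)) * (a * ((b * (x * b)) * a))) * a) := by
      simp only [ix, mul_assoc, can hx, can ha, can hb, sw cab, hx, ha, hb, hab, mul_one, one_mul]
    have e2 : x⁻¹ * a * x = ((x * (a * (x * a))) * a) := by
      simp only [ix, mul_assoc, can hx, can ha, can hb, sw cab, hx, ha, hb, hab, mul_one, one_mul]
    rw [e1, e2] at h; exact h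
  have ep : ((x * (a * (x * a))) * a) * a = (x * (a * (x * a))) := by simp only [mul_assoc, can hx, can ha, can hb, sw cab, hx, ha, hb, hab, mul_one, one_mul]
  have eP : (((b * (x * b)) * (a * ((b * (x * b)) * a))) * a) * a = ((b * (x * b)) * (a * ((b * (x * b)) * a))) := by simp only [mul_assoc, can hx, can ha, can hb, sw cab, hx, ha, hb, hab, mul_one, one_mul]
  have cqqz : Commute (x * (a * (x * a))) ((b * (x * b)) * (a * ((b * (x * b)) * a))) := by
    have h1 : (x * (a * (x * a))) * ((b * (x * b)) * (a * ((b * (x * b)) * a))) = ((x * (a * (x * a))) * a) * (((b * (x * b)) * (a * ((b * (x * b)) * a))) * a) := by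
      calc (x * (a * (x * a))) * ((b * (x * b)) * (a * ((b * (x * b)) * a))) = (((x * (a * (x * a))) * a) * a) * ((((b * (x * b)) * (a * ((b * (x * b)) * a))) * a) * a) := by rw [ep, eP]
        _ = ((x * (a * (x * a))) * a) * (a * ((((b * (x * b)) * (a * ((b * (x * b)) * a))) * a) * a)) := by rw [mul_assoc]
        _ = ((x * (a * (x * a))) * a) * (((b * (x * b)) * (a * ((b * (x * b)) * a))) * a) := by rw [sw cPa.symm, ha, mul_one]
    have h2 : ((b * (x * b)) * (a * ((b * (x * b)) * a))) * (x * (a * (x * a))) = (((b * (x * b)) * (a * ((b * (x * b)) * a))) * a) * ((x * (a * (x * a))) * a) := by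
      calc ((b * (x * b)) * (a * ((b * (x * b)) * a))) * (x * (a * (x * a))) = ((((b * (x * b)) * (a * ((b * (x * b)) * a))) * a) * a) * (((x * (a * (x * a))) * a) * a) := by rw [ep, eP]
        _ = (((b * (x * b)) * (a * ((b * (x * b)) * a))) * a) * (a * (((x * (a * (x * a))) * a) * a)) := by rw [mul_assoc]
        _ = (((b * (x * b)) * (a * ((b * (x * b)) * a))) * a) * ((x * (a * (x * a))) * a) := by rw [sw cpa.symm, ha, mul_one]
    exact h1.trans (cPp.symm.eq.trans h2.symm)
  have cxq : Commute x (x * (a * (x * a))) := (Commute.refl x).mul_right cxy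
  have czqz : Commute (b * (x * b)) ((b * (x * b)) * (a * ((b * (x * b)) * a))) := (Commute.refl (b * (x * b))).mul_right czw.symm
  -- the element t and its basic properties
  have E1 : ⁅x, (a * b)⁻¹ * x * (a * b)⁆ = (x * ((a * ((b * (x * b)) * a)) * (x * (a * ((b * (x * b)) * a))))) := by
    simp only [commutatorElement_def, mul_inv_rev, inv_inv, ix, ia, ib, mul_assoc,
      can hx, can ha, can hb, sw cab, hx, ha, hb, hab, mul_one, one_mul]
  rw [E1] at c1a
  have ctx : Commute (x * ((a * ((b * (x * b)) * a)) * (x * (a * ((b * (x * b)) * a))))) x := c1a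
  have hTx : x * ((x * ((a * ((b * (x * b)) * a)) * (x * (a * ((b * (x * b)) * a))))) * x) = (x * ((a * ((b * (x * b)) * a)) * (x * (a * ((b * (x * b)) * a))))) := by rw [ctx.eq, can hx]
  have e2 : x * ((x * ((a * ((b * (x * b)) * a)) * (x * (a * ((b * (x * b)) * a))))) * x) = (a * ((b * (x * b)) * a)) * (x * ((a * ((b * (x * b)) * a)) * x)) := by simp only [mul_assoc, can hx, can ha, can hb, sw cab, hx, ha, hb, hab, mul_one, one_mul]
  have e3 : (a * ((b * (x * b)) * a)) * (x * ((a * ((b * (x * b)) * a)) * x)) = (x * ((a * ((b * (x * b)) * a)) * (x * (a * ((b * (x * b)) * a))))) := e2.symm.trans hTx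
  have iT : (x * ((a * ((b * (x * b)) * a)) * (x * (a * ((b * (x * b)) * a))))) * (x * ((a * ((b * (x * b)) * a)) * (x * (a * ((b * (x * b)) * a))))) = 1 := by
    nth_rewrite 2 [← e3]
    simp only [mul_assoc, can hx, can ha, can hb, sw cab, hx, ha, hb, hab, mul_one, one_mul]
  -- the main identity
  have g1 : (a * (x * a)) * ((a * ((b * (x * b)) * a)) * ((a * (x * a)) * (a * ((b * (x * b)) * a)))) = 1 := by
    rw [sw cwy]
    simp only [mul_assoc, can hx, can ha, can hb, sw cab, hx, ha, hb, hab, mul_one, one_mul]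
  have e0 : (x * (x * (a * (x * a)))) * (((b * (x * b)) * ((b * (x * b)) * (a * ((b * (x * b)) * a)))) * ((x * (x * (a * (x * a)))) * ((b * (x * b)) * ((b * (x * b)) * (a * ((b * (x * b)) * a)))))) =
      (a * (x * a)) * ((a * ((b * (x * b)) * a)) * ((a * (x * a)) * (a * ((b * (x * b)) * a)))) := by simp only [mul_assoc, can hx, can ha, can hb, sw cab, hx, ha, hb, hab, mul_one, one_mul]
  have st1 : ((x * (a * (x * a))) * ((b * (x * b)) * ((x * (a * (x * a))) * (b * (x * b))))) * (x * (((b * (x * b)) * (a * ((b * (x * b)) * a))) * (x * ((b * (x * b)) * (a * ((b * (x * b)) * a)))))) = 1 :=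
    ((Mlemma x (b * (x * b)) (x * (a * (x * a))) ((b * (x * b)) * (a * ((b * (x * b)) * a))) cxz cxq czqz cqqz).symm).trans (e0.trans g1)
  have eS : (x * (a * (x * a))) * ((b * (x * b)) * ((x * (a * (x * a))) * (b * (x * b)))) = ((a * (x * a)) * ((b * (x * b)) * ((a * (x * a)) * (b * (x * b))))) := Slemma x (a * (x * a)) (b * (x * b)) hx cxy cxz
  have eT : x * (((b * (x * b)) * (a * ((b * (x * b)) * a))) * (x * ((b * (x * b)) * (a * ((b * (x * b)) * a))))) = (x * ((a * ((b * (x * b)) * a)) * (x * (a * ((b * (x * b)) * a))))) := by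
    have h := Tlemma x (b * (x * b)) ((b * (x * b)) * (a * ((b * (x * b)) * a))) hzz cxz czqz
    have e4 : x * (((b * (x * b)) * ((b * (x * b)) * (a * ((b * (x * b)) * a)))) * (x * ((b * (x * b)) * ((b * (x * b)) * (a * ((b * (x * b)) * a)))))) = (x * ((a * ((b * (x * b)) * a)) * (x * (a * ((b * (x * b)) * a))))) := by simp only [mul_assoc, can hx, can ha, can hb, sw cab, hx, ha, hb, hab, mul_one, one_mul]
    exact h.symm.trans e4
  have stST : ((a * (x * a)) * ((b * (x * b)) * ((a * (x * a)) * (b * (x * b))))) * (x * ((a * ((b * (x * b)) * a)) * (x * (a * ((b * (x * b)) * a))))) = 1 := by rw [← eS, ← eT]; exact st1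
  have mainS : ((a * (x * a)) * ((b * (x * b)) * ((a * (x * a)) * (b * (x * b))))) = (x * ((a * ((b * (x * b)) * a)) * (x * (a * ((b * (x * b)) * a))))) := by
    calc ((a * (x * a)) * ((b * (x * b)) * ((a * (x * a)) * (b * (x * b))))) = ((a * (x * a)) * ((b * (x * b)) * ((a * (x * a)) * (b * (x * b))))) * ((x * ((a * ((b * (x * b)) * a)) * (x * (a * ((b * (x * b)) * a))))) * (x * ((a * ((b * (x * b)) * a)) * (x * (a * ((b * (x * b)) * a)))))) := by rw [iT, mul_one]
      _ = (((a * (x * a)) * ((b * (x * b)) * ((a * (x * a)) * (b * (x * b))))) * (x * ((a * ((b * (x * b)) * a)) * (x * (a * ((b * (x * b)) * a)))))) * (x * ((a * ((b * (x * b)) * a)) * (x * (a * ((b * (x * b)) * a))))) := (mul_assoc ((a * (x * a)) * ((b * (x * b)) * ((a * (x * a)) * (b * (x * b))))) (x * ((a * ((b * (x * b)) * a)) * (x * (a * ((b * (x * b)) * a))))) (x * ((a * ((b * (x * b)) * a)) * (x * (a * ((b * (x * b)) * a)))))).symm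
      _ = (x * ((a * ((b * (x * b)) * a)) * (x * (a * ((b * (x * b)) * a))))) := by rw [stST, one_mul]
  have main : (x * ((a * ((b * (x * b)) * a)) * (x * (a * ((b * (x * b)) * a))))) = ((a * (x * a)) * ((b * (x * b)) * ((a * (x * a)) * (b * (x * b))))) := mainS.symm
  -- conjugation facts
  have cta : Commute (x * ((a * ((b * (x * b)) * a)) * (x * (a * ((b * (x * b)) * a))))) a := by
    have e5 : a * ((x * ((a * ((b * (x * b)) * a)) * (x * (a * ((b * (x * b)) * a))))) * a) = ((a * (x * a)) * ((b * (x * b)) * ((a * (x * a)) * (b * (x * b))))) := by simp only [mul_assoc, can hx, can ha, can hb, sw cab, hx, ha, hb, hab, mul_one, one_mul]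
    have e5' : a * ((x * ((a * ((b * (x * b)) * a)) * (x * (a * ((b * (x * b)) * a))))) * a) = (x * ((a * ((b * (x * b)) * a)) * (x * (a * ((b * (x * b)) * a))))) := e5.trans main.symm
    have h : a * (a * ((x * ((a * ((b * (x * b)) * a)) * (x * (a * ((b * (x * b)) * a))))) * a)) = a * (x * ((a * ((b * (x * b)) * a)) * (x * (a * ((b * (x * b)) * a))))) := by rw [e5']
    rw [can ha] at h
    exact h
  have ctb : Commute (x * ((a * ((b * (x * b)) * a)) * (x * (a * ((b * (x * b)) * a))))) b := by
    have e6 : b * ((x * ((a * ((b * (x * b)) * a)) * (x * (a * ((b * (x * b)) * a))))) * b) = (b * (x * b)) * ((a * (x * a)) * ((b * (x * b)) * (a * (x * a)))) := by simp only [mul_assoc, can hx, can ha, can hb, sw cab, hx, ha, hb, hab, mul_one, one_mul]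
    have e7 : ((a * (x * a)) * ((b * (x * b)) * ((a * (x * a)) * (b * (x * b))))) * ((b * (x * b)) * ((a * (x * a)) * ((b * (x * b)) * (a * (x * a))))) = 1 := by simp only [mul_assoc, can hx, can ha, can hb, sw cab, hx, ha, hb, hab, mul_one, one_mul]
    have iS : ((a * (x * a)) * ((b * (x * b)) * ((a * (x * a)) * (b * (x * b))))) * ((a * (x * a)) * ((b * (x * b)) * ((a * (x * a)) * (b * (x * b))))) = 1 := by rw [mainS]; exact iT
    have e8 : (b * (x * b)) * ((a * (x * a)) * ((b * (x * b)) * (a * (x * a)))) = ((a * (x * a)) * ((b * (x * b)) * ((a * (x * a)) * (b * (x * b))))) := mul_left_cancel (e7.trans iS.symm)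
    have e6' : b * ((x * ((a * ((b * (x * b)) * a)) * (x * (a * ((b * (x * b)) * a))))) * b) = (x * ((a * ((b * (x * b)) * a)) * (x * (a * ((b * (x * b)) * a))))) := e6.trans (e8.trans main.symm)
    have h : b * (b * ((x * ((a * ((b * (x * b)) * a)) * (x * (a * ((b * (x * b)) * a))))) * b)) = b * (x * ((a * ((b * (x * b)) * a)) * (x * (a * ((b * (x * b)) * a))))) := by rw [e6']
    rw [can hb] at h
    exact h
  -- reformulate the goal
  have eTgoal : paperComm x ((a * b)⁻¹ * x * (a * b)) = (x * ((a * ((b * (x * b)) * a)) * (x * (a * ((b * (x * b)) * a))))) := by simp only [paperComm, commutatorElement_def, mul_inv_rev, inv_inv, ix, ia, ib, mul_assoc, can hx, can ha, can hb, sw cab, hx, ha, hb, hab, mul_one, one_mul]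
  have eSgoal : paperComm (a⁻¹ * x * a) (b⁻¹ * x * b) = ((a * (x * a)) * ((b * (x * b)) * ((a * (x * a)) * (b * (x * b))))) := by simp only [paperComm, commutatorElement_def, mul_inv_rev, inv_inv, ix, ia, ib, mul_assoc, can hx, can ha, can hb, sw cab, hx, ha, hb, hab, mul_one, one_mul]
  refine ⟨eTgoal.trans (main.trans eSgoal.symm), ?_, ?_, ?_⟩
  · rw [eTgoal]; exact ctx
  · rw [eTgoal]; exact cta
  · rw [eTgoal]; exact ctb

end Helpers

theorem stmt5 {G : Type*} [Group G] (x a b c : G)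
    (hx : x ^ 2 = 1) (ha : a ^ 2 = 1) (hb : b ^ 2 = 1) (hc : c ^ 2 = 1)
    (hab : Commute a b) (hbc : Commute b c) (hca : Commute c a)
    (hgen : Subgroup.closure ({x, a, b, c} : Set G) = ⊤)
    (hsand : ∀ u ∈ ({x, a, b, c} : Set G), ∀ v ∈ ({x, a, b, c} : Set G), ∀ g : G,
      (⊤ : Subgroup ↥(Subgroup.closure ({u, g⁻¹ * v * g} : Set G))).lowerCentralSeries 2 = ⊥) :
    (paperComm x ((a * b)⁻¹ * x * (a * b)) = paperComm (a⁻¹ * x * a) (b⁻¹ * x * b) ∧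
      Commute (paperComm x ((a * b)⁻¹ * x * (a * b))) x ∧
      Commute (paperComm x ((a * b)⁻¹ * x * (a * b))) a ∧
      Commute (paperComm x ((a * b)⁻¹ * x * (a * b))) b) ∧
    (paperComm x ((b * c)⁻¹ * x * (b * c)) = paperComm (b⁻¹ * x * b) (c⁻¹ * x * c) ∧
      Commute (paperComm x ((b * c)⁻¹ * x * (b * c))) x ∧
      Commute (paperComm x ((b * c)⁻¹ * x * (b * c))) b ∧
      Commute (paperComm x ((b * c)⁻¹ * x * (b * c))) c) ∧
    (paperComm x ((c * a)⁻¹ * x * (c * a)) = paperComm (c⁻¹ * x * c) (a⁻¹ * x * a) ∧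
      Commute (paperComm x ((c * a)⁻¹ * x * (c * a))) x ∧
      Commute (paperComm x ((c * a)⁻¹ * x * (c * a))) c ∧
      Commute (paperComm x ((c * a)⁻¹ * x * (c * a))) a) := by
  have mx : x ∈ ({x, a, b, c} : Set G) := by simp
  have ma : a ∈ ({x, a, b, c} : Set G) := by simp
  have mb : b ∈ ({x, a, b, c} : Set G) := by simp
  have mc : c ∈ ({x, a, b, c} : Set G) := by simp
  have hx' : x * x = 1 := by rw [← sq]; exact hx
  have ha' : a * a = 1 := by rw [← sq]; exact ha
  have hb' : b * b = 1 := by rw [← sq]; exact hb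
  have hc' : c * c = 1 := by rw [← sq]; exact hc
  refine ⟨?_, ?_, ?_⟩
  · exact key x a b hx' ha' hb' hab.eq
      (hsand x mx x mx (a * b)) (hsand b mb x mx a) (hsand a ma x mx a)
      (hsand a ma x mx b) (hsand b mb x mx b) (hsand b mb a ma x)
  · exact key x b c hx' hb' hc' hbc.eq
      (hsand x mx x mx (b * c)) (hsand c mc x mx b) (hsand b mb x mx b)
      (hsand b mb x mx c) (hsand c mc x mx c) (hsand c mc b mb x)
  · exact key x c a hx' hc' ha' hca.eq
      (hsand x mx x mx (c * a)) (hsand a ma x mx c) (hsand c mc x mx c)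
      (hsand c mc x mx a) (hsand a ma x mx a) (hsand a ma c mc x)
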